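/- Let (X, Π) be a weighted pure d-dimensional simplicial complex that is a γ-local-spectral expander, and let 0 ≤ a < b ≤ d−1. Then λ₂(U_{a,b}) ≤ (1 + γ)^{b−a} · (a+1)/(b+1). In particular, if γ ≤ ε/(b−a) for some 0 ≤ ε ≤ 1, then λ₂(U_{a,b}) ≤ e^ε · (a+1)/(b+1). -/

import Mathlib

open Finset

/-- A weighted pure `d`-dimensional simplicial complex on a finite ground set `V`.
Faces are finsets; a face of cardinality `m` has dimension `m - 1` (so `X(j)` is the
set of faces of cardinality `j + 1`).  The family of faces is downward closed, every
face is contained in a face of cardinality `d + 1` (purity), and a probability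
distribution `Π = Π_d` (positive weights summing to `1`) is given on the
top-dimensional faces. -/
structure WSC (V : Type*) [DecidableEq V] [Fintype V] (d : ℕ) where
  faces : Finset (Finset V)
  empty_mem : ∅ ∈ faces
  down_closed : ∀ β ∈ faces, ∀ α ⊆ β, α ∈ faces
  pure : ∀ α ∈ faces, ∃ β ∈ faces, α ⊆ β ∧ β.card = d + 1
  dim_le : ∀ α ∈ faces, α.card ≤ d + 1
  weight : Finset V → ℝ
  weight_pos : ∀ β ∈ faces, β.card = d + 1 → 0 < weight β
  weight_zero : ∀ β : Finset V, β ∉ faces ∨ β.card ≠ d + 1 → weight β = 0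
  weight_sum : ∑ β ∈ faces.filter (fun β => β.card = d + 1), weight β = 1

namespace WSC

variable {V : Type*} [DecidableEq V] [Fintype V] {d : ℕ}

/-- Auxiliary recursion for the marginal distributions: `Waux X t` is the marginal
distribution `Π_{d - t}` on faces of cardinality `d + 1 - t`, defined by
`Π_j(α) = (1/(j+2)) ∑_{β ∈ X(j+1), β ⊇ α} Π_{j+1}(β)`. -/
noncomputable def Waux (X : WSC V d) : ℕ → Finset V → ℝ
  | 0 => X.weight
  | (t + 1) => fun α =>
      (1 / ((d + 1 - t : ℕ) : ℝ)) *
        ∑ β ∈ X.faces.filter (fun β => α ⊆ β ∧ β.card = d + 1 - t), X.Waux t β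

/-- `X.W m α` is the marginal probability `Π_{m-1}(α)` of the face `α` of cardinality
`m` (dimension `m - 1`). -/
noncomputable def W (X : WSC V d) (m : ℕ) : Finset V → ℝ := X.Waux (d + 1 - m)

/-- The inner product `⟨f, g⟩_{Π_{m-1}}` on `ℝ^{X(m-1)}` (faces of cardinality `m`). -/
noncomputable def inn (X : WSC V d) (m : ℕ) (f g : Finset V → ℝ) : ℝ :=
  ∑ α ∈ X.faces.filter (fun α => α.card = m), X.W m α * f α * g α

/-- The up operator `U_j`: `(U_j f)(β) = (1/(j+2)) ∑_{x ∈ β} f(β \ {x})`, for `β` of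
cardinality `j + 2`.  (The formula is uniform in the cardinality of `β`.) -/
noncomputable def upOp (f : Finset V → ℝ) : Finset V → ℝ :=
  fun β => (1 / (β.card : ℝ)) * ∑ x ∈ β, f (β.erase x)

/-- The down operator `D_{j+1}`:
`(D_{j+1} g)(α) = ∑_{β ∈ X(j+1), β ⊇ α} Π_{j+1}(β) g(β) / ((j+2) Π_j(α))`, for `α` of
cardinality `j + 1`.  (The formula is uniform in the cardinality of `α`.) -/
noncomputable def downOp (X : WSC V d) (g : Finset V → ℝ) : Finset V → ℝ :=
  fun α => ∑ β ∈ X.faces.filter (fun β => α ⊆ β ∧ β.card = α.card + 1),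
      (X.W (α.card + 1) β * g β) / (((α.card : ℝ) + 1) * X.W α.card α)

/-- The down-up walk `P∨_k = U_{k-1} D_k`, acting on functions on `X(k)` (faces of
cardinality `k + 1`). -/
noncomputable def downUp (X : WSC V d) (f : Finset V → ℝ) : Finset V → ℝ :=
  upOp (X.downOp f)

/-- The up-down walk `P∧_k = D_{k+1} U_k`, acting on functions on `X(k)` (faces of
cardinality `k + 1`). -/
noncomputable def upDown (X : WSC V d) (f : Finset V → ℝ) : Finset V → ℝ :=
  X.downOp (upOp f)

/-- The `k`-th non-lazy up-down walk `N_k = ((k+2)/(k+1)) (P∧_k - (1/(k+2)) I)`. -/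
noncomputable def nonLazy (X : WSC V d) (k : ℕ) (f : Finset V → ℝ) : Finset V → ℝ :=
  fun α => (((k : ℝ) + 2) / ((k : ℝ) + 1)) * (X.upDown f α - (1 / ((k : ℝ) + 2)) * f α)

/-- The up-down walk `U_{a,b} = D_{a+1} ⋯ D_b · U_{b-1} ⋯ U_a` on `X(a)` through
`X(b)`, where `t = b - a`. -/
noncomputable def upDownAB (X : WSC V d) (t : ℕ) (f : Finset V → ℝ) : Finset V → ℝ :=
  (X.downOp)^[t] (upOp^[t] f)

/-- The second largest eigenvalue of a row-stochastic operator `M` on `ℝ^{X(m-1)}`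
(faces of cardinality `m`) which is self-adjoint with respect to `⟨·,·⟩_{Π_{m-1}}`
and has stationary distribution `Π_{m-1}`: by the variational principle it is the
supremum of the Rayleigh quotients of (nonzero) functions orthogonal to the
constant function `1`. -/
noncomputable def lam2 (X : WSC V d) (m : ℕ) (M : (Finset V → ℝ) → Finset V → ℝ) : ℝ :=
  sSup { r : ℝ | ∃ f : Finset V → ℝ,
    X.inn m f (fun _ => 1) = 0 ∧ X.inn m f f ≠ 0 ∧
    r = X.inn m f (M f) / X.inn m f f }

/-- The vertices of the link `X_α`: those `x ∉ α` with `α ∪ {x} ∈ X`. -/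
def linkVerts (X : WSC V d) (α : Finset V) : Finset V :=
  Finset.univ.filter (fun x => x ∉ α ∧ insert x α ∈ X.faces)

/-- The link distribution `Π^α_l(τ) = Π_{j+1+l}(α ∪ τ) / (C(|α ∪ τ|, |α|) · Π_j(α))`
for a face `α` of dimension `j` and `τ ∈ X_α(l)`. -/
noncomputable def linkPi (X : WSC V d) (α τ : Finset V) : ℝ :=
  X.W (α ∪ τ).card (α ∪ τ) / ((Nat.choose (α ∪ τ).card α.card : ℝ) * X.W α.card α)

/-- The random walk matrix `M_α` of the graph of the link `X_α`, with entries
`M_α(x, y) = Π^α_1({x, y}) / (2 Π^α_0(x))` for `{x, y} ∈ X_α(1)` and `0` otherwise,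
viewed as an operator on functions on the vertices of the link. -/
noncomputable def linkWalk (X : WSC V d) (α : Finset V) (f : V → ℝ) : V → ℝ :=
  fun x => ∑ y ∈ (X.linkVerts α).filter
      (fun y => y ≠ x ∧ insert y (insert x α) ∈ X.faces),
    (X.linkPi α {x, y} / (2 * X.linkPi α {x})) * f y

/-- The projector `J_α` onto the constant functions on the link: `J_α g` is the
constant function with value `E_{x ∼ Π^α_0}[g(x)]`. -/
noncomputable def linkJ (X : WSC V d) (α : Finset V) (g : V → ℝ) : V → ℝ :=
  fun _ => ∑ x ∈ X.linkVerts α, X.linkPi α {x} * g x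

/-- The inner product `⟨g, h⟩_{Π^α_0}` on functions on the vertices of the link. -/
noncomputable def linkInner (X : WSC V d) (α : Finset V) (g h : V → ℝ) : ℝ :=
  ∑ x ∈ X.linkVerts α, X.linkPi α {x} * g x * h x

/-- The second largest eigenvalue `λ₂(M_α)` of the random walk matrix of the graph
of the link `X_α`, via the variational principle. -/
noncomputable def linkLam2 (X : WSC V d) (α : Finset V) : ℝ :=
  sSup { r : ℝ | ∃ f : V → ℝ,
    X.linkInner α f (fun _ => 1) = 0 ∧ X.linkInner α f f ≠ 0 ∧
    r = X.linkInner α f (X.linkWalk α f) / X.linkInner α f f }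

/-- `X.gammaC m` is `γ_{m-1} = max_{α ∈ X(m-1)} λ₂(M_α)`, the maximum over faces `α`
of cardinality `m` (dimension `m - 1`) of the second eigenvalue of the link walk. -/
noncomputable def gammaC (X : WSC V d) (m : ℕ) : ℝ :=
  sSup { r : ℝ | ∃ α ∈ X.faces, α.card = m ∧ r = X.linkLam2 α }

end WSC

namespace WSC
variable {V : Type*} [DecidableEq V] [Fintype V] {d : ℕ} (X : WSC V d)

lemma weight_nonneg (β : Finset V) : 0 ≤ X.weight β := by
  by_cases h : β ∈ X.faces ∧ β.card = d + 1
  · exact (X.weight_pos β h.1 h.2).le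
  · rw [X.weight_zero β (by tauto)]

lemma Waux_nonneg (t : ℕ) (β : Finset V) : 0 ≤ X.Waux t β := by
  induction t generalizing β with
  | zero => exact X.weight_nonneg β
  | succ t ih =>
    simp only [Waux]
    exact mul_nonneg (by positivity) (Finset.sum_nonneg fun γ _ => ih γ)

lemma W_nonneg (m : ℕ) (β : Finset V) : 0 ≤ X.W m β := X.Waux_nonneg _ β

lemma W_rec {m : ℕ} (hm : m ≤ d) (α : Finset V) :
    X.W m α = (1 / ((m : ℝ) + 1)) *
      ∑ β ∈ X.faces.filter (fun β => α ⊆ β ∧ β.card = m + 1), X.W (m + 1) β := by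
  have h1 : d + 1 - m = (d - m) + 1 := by omega
  have h2 : d + 1 - (d - m) = m + 1 := by omega
  have h3 : d + 1 - (m + 1) = d - m := by omega
  rw [W, h1]
  simp only [Waux, h2, W, h3]
  norm_num

lemma W_top (α : Finset V) : X.W (d + 1) α = X.weight α := by
  rw [W, Nat.sub_self]; rfl

lemma W_pos : ∀ n : ℕ, ∀ m : ℕ, m + n = d + 1 → ∀ α ∈ X.faces, α.card = m → 0 < X.W m α := by
  intro n
  induction n with
  | zero =>
    intro m hm α hα hc
    have hmd : m = d + 1 := by omega
    subst hmd
    rw [W_top]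
    exact X.weight_pos α hα hc
  | succ n ih =>
    intro m hm α hα hc
    have hmd : m ≤ d := by omega
    rw [X.W_rec hmd]
    obtain ⟨γ, hγ, hαγ, hγc⟩ := X.pure α hα
    obtain ⟨β, hαβ, hβγ, hβc⟩ := Finset.exists_subsuperset_card_eq (n := 1 + α.card) hαγ (by omega) (by omega)
    have hβf : β ∈ X.faces := X.down_closed γ hγ β hβγ
    have hβc' : β.card = m + 1 := by omega
    refine mul_pos (by positivity) (Finset.sum_pos' (fun γ' _ => X.W_nonneg _ γ') ⟨β, ?_, ?_⟩)
    · simp only [Finset.mem_filter]; exact ⟨hβf, hαβ, hβc'⟩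
    · exact ih (m + 1) (by omega) β hβf hβc'

lemma W_pos' {α : Finset V} (hα : α ∈ X.faces) : 0 < X.W α.card α :=
  X.W_pos (d + 1 - α.card) α.card (by have := X.dim_le α hα; omega) α hα rfl

/-- faces containing `α` with one more element = image of linkVerts under insert -/
lemma filter_superset_eq_image {α : Finset V} (hα : α ∈ X.faces) :
    X.faces.filter (fun β => α ⊆ β ∧ β.card = α.card + 1) =
      (X.linkVerts α).image (fun x => insert x α) := by
  ext β
  simp only [Finset.mem_filter, Finset.mem_image, linkVerts, Finset.mem_univ, true_and]
  constructor
  · rintro ⟨hβf, hαβ, hβc⟩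
    have h1 : (β \ α).card = 1 := by rw [Finset.card_sdiff_of_subset hαβ]; omega
    obtain ⟨x, hx⟩ := Finset.card_eq_one.mp h1
    have hxβ : x ∈ β \ α := hx ▸ Finset.mem_singleton_self x
    rw [Finset.mem_sdiff] at hxβ
    refine ⟨x, ⟨hxβ.2, ?_⟩, ?_⟩
    · have : insert x α ⊆ β := Finset.insert_subset hxβ.1 hαβ
      exact X.down_closed β hβf _ this
    · apply Finset.eq_of_subset_of_card_le (Finset.insert_subset hxβ.1 hαβ)
      rw [Finset.card_insert_of_notMem hxβ.2]; omega
  · rintro ⟨x, ⟨hxα, hxf⟩, rfl⟩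
    exact ⟨hxf, Finset.subset_insert _ _, Finset.card_insert_of_notMem hxα⟩

lemma insert_inj_on {α : Finset V} :
    ∀ x ∈ X.linkVerts α, ∀ y ∈ X.linkVerts α, insert x α = insert y α → x = y := by
  intro x hx y hy hxy
  simp only [linkVerts, Finset.mem_filter] at hx hy
  have : x ∈ insert y α := hxy ▸ Finset.mem_insert_self x α
  rcases Finset.mem_insert.mp this with h | h
  · exact h
  · exact absurd h hx.2.1

lemma filter_subset_eq_image_erase {β : Finset V} (hβ : β ∈ X.faces) {m : ℕ}
    (hc : β.card = m + 1) :
    (X.faces.filter (fun α => α.card = m)).filter (fun α => α ⊆ β) = β.image β.erase := by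
  ext α
  simp only [Finset.mem_filter, Finset.mem_image]
  constructor
  · rintro ⟨⟨hαf, hαc⟩, hαβ⟩
    have h1 : (β \ α).card = 1 := by rw [Finset.card_sdiff_of_subset hαβ]; omega
    obtain ⟨x, hx⟩ := Finset.card_eq_one.mp h1
    have hxβ : x ∈ β \ α := hx ▸ Finset.mem_singleton_self x
    rw [Finset.mem_sdiff] at hxβ
    refine ⟨x, hxβ.1, ?_⟩
    refine (Finset.eq_of_subset_of_card_le ?_ ?_).symm
    · intro y hy
      rw [Finset.mem_erase]
      exact ⟨fun h => hxβ.2 (h ▸ hy), hαβ hy⟩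
    · rw [Finset.card_erase_of_mem hxβ.1]; omega
  · rintro ⟨x, hxβ, rfl⟩
    exact ⟨⟨X.down_closed β hβ _ (Finset.erase_subset x β),
      by rw [Finset.card_erase_of_mem hxβ]; omega⟩, Finset.erase_subset x β⟩

/-- Adjointness: `⟨U u, v⟩_{m+1} = ⟨u, D v⟩_m`. -/
lemma inn_upOp_eq {m : ℕ} (hm : m ≤ d) (u v : Finset V → ℝ) :
    X.inn (m + 1) (upOp u) v = X.inn m u (X.downOp v) := by
  have hstep1 : X.inn (m + 1) (upOp u) v =
      ∑ β ∈ X.faces.filter (fun β => β.card = m + 1),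
        (X.W (m+1) β * v β / ((m:ℝ)+1)) * ∑ x ∈ β, u (β.erase x) := by
    apply Finset.sum_congr rfl
    intro β hβ
    rw [Finset.mem_filter] at hβ
    simp only [upOp, hβ.2]
    push_cast
    ring
  have hstep2 : X.inn m u (X.downOp v) =
      ∑ α ∈ X.faces.filter (fun α => α.card = m),
        ∑ β ∈ X.faces.filter (fun β => α ⊆ β ∧ β.card = m + 1),
          (X.W (m+1) β * v β / ((m:ℝ)+1)) * u α := by
    apply Finset.sum_congr rfl
    intro α hα
    rw [Finset.mem_filter] at hα
    have hW : X.W m α ≠ 0 := by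
      have := X.W_pos' hα.1; rw [hα.2] at this; exact ne_of_gt this
    simp only [downOp, hα.2]
    rw [Finset.mul_sum]
    apply Finset.sum_congr rfl
    intro β _
    field_simp
  rw [hstep1, hstep2]
  rw [Finset.sum_comm' (t' := X.faces.filter (fun β => β.card = m + 1))
    (s' := fun β => (X.faces.filter (fun α => α.card = m)).filter (fun α => α ⊆ β)) ?_]
  · apply Finset.sum_congr rfl
    intro β hβ
    rw [Finset.mem_filter] at hβ
    rw [X.filter_subset_eq_image_erase hβ.1 hβ.2,
      Finset.sum_image (fun x hx y hy h => Finset.erase_injOn β hx hy h), ← Finset.mul_sum]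
  · intro α β
    simp only [Finset.mem_filter]
    tauto


lemma union_singleton' (s : Finset V) (a : V) : s ∪ {a} = insert a s := by
  rw [Finset.union_comm]; rfl

lemma union_pair (s : Finset V) (a b : V) : s ∪ {a, b} = insert a (insert b s) := by
  show s ∪ insert a {b} = _
  rw [Finset.union_insert, union_singleton']

lemma mem_linkVerts {σ : Finset V} {x : V} :
    x ∈ X.linkVerts σ ↔ x ∉ σ ∧ insert x σ ∈ X.faces := by
  simp [linkVerts]

lemma insert_mem_faces {σ : Finset V} {x : V} (hx : x ∈ X.linkVerts σ) :
    insert x σ ∈ X.faces := ((X.mem_linkVerts).mp hx).2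

lemma card_insert_linkVerts {σ : Finset V} {x : V} (hx : x ∈ X.linkVerts σ) :
    (insert x σ).card = σ.card + 1 :=
  Finset.card_insert_of_notMem ((X.mem_linkVerts).mp hx).1

/-- `Π^σ_0({x}) = W(insert x σ) / ((k+1) W(σ))` -/
lemma linkPi_single {σ : Finset V} {x : V} (hx : x ∈ X.linkVerts σ) :
    X.linkPi σ {x} = X.W (σ.card + 1) (insert x σ) / (((σ.card : ℝ) + 1) * X.W σ.card σ) := by
  rw [mem_linkVerts] at hx
  rw [linkPi, union_singleton', Finset.card_insert_of_notMem hx.1]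
  norm_num [Nat.choose_succ_self_right]

lemma linkPi_single_pos {σ : Finset V} (hσ : σ ∈ X.faces) {x : V} (hx : x ∈ X.linkVerts σ) :
    0 < X.linkPi σ {x} := by
  rw [X.linkPi_single hx]
  have h1 := X.W_pos' (X.insert_mem_faces hx)
  rw [X.card_insert_linkVerts hx] at h1
  have h2 := X.W_pos' hσ
  positivity

lemma two_mul_choose (k : ℕ) : ((k+2).choose k : ℝ) * 2 = ((k:ℝ)+2) * ((k:ℝ)+1) := by
  have h2 : (k+2).choose k * 2 = (k+2) * (k+1) := by
    have h1 := Nat.choose_symm (show k ≤ k + 2 by omega)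
    rw [show k + 2 - k = 2 by omega] at h1
    rw [← h1, Nat.choose_two_right]
    obtain ⟨c, hc⟩ := Nat.even_mul_succ_self (k+1)
    have h3 : (k+2) * (k + 2 - 1) = c + c := by
      rw [show k + 2 - 1 = k + 1 by omega, mul_comm (k+2) (k+1)]
      exact hc
    rw [h3, mul_comm (k+2) (k+1), hc]
    omega
  rw [show ((k:ℝ)+2) * ((k:ℝ)+1) = (((k+2) * (k+1) : ℕ) : ℝ) by push_cast; ring, ← h2]
  push_cast
  ring

/-- `Π^σ_1({x,y}) = 2 W(insert y (insert x σ)) / ((k+2)(k+1) W(σ))` for distinct `x,y ∉ σ`. -/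
lemma linkPi_pair {σ : Finset V} (hσ : σ ∈ X.faces) {x y : V} (hx : x ∉ σ) (hy : y ∉ σ)
    (hxy : x ≠ y) :
    X.linkPi σ {x, y} = 2 * X.W (σ.card + 2) (insert y (insert x σ)) /
      ((((σ.card:ℝ)+2) * ((σ.card:ℝ)+1)) * X.W σ.card σ) := by
  have hcard : (insert y (insert x σ)).card = σ.card + 2 := by
    rw [Finset.card_insert_of_notMem (by simp [hy, Ne.symm hxy]),
      Finset.card_insert_of_notMem hx]
  have hset : σ ∪ {x, y} = insert y (insert x σ) := by
    rw [union_pair, Finset.insert_comm]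
  have hWσ := X.W_pos' hσ
  have hch : (0:ℝ) < (((σ.card+2).choose σ.card : ℕ) : ℝ) := by
    exact_mod_cast Nat.choose_pos (show σ.card ≤ σ.card + 2 by omega)
  rw [linkPi, hset, hcard]
  rw [div_eq_div_iff (by positivity) (by positivity)]
  rw [← two_mul_choose σ.card]
  ring

/-- key simplification: the neighbours of `x` in the link of `σ` are `linkVerts (insert x σ)` -/
lemma linkVerts_insert {σ : Finset V} {x : V} (hx : x ∉ σ) :
    (X.linkVerts σ).filter (fun y => y ≠ x ∧ insert y (insert x σ) ∈ X.faces) =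
      X.linkVerts (insert x σ) := by
  ext y
  simp only [Finset.mem_filter, mem_linkVerts, Finset.mem_insert]
  constructor
  · rintro ⟨⟨hyσ, _⟩, hyx, hf⟩
    exact ⟨by tauto, hf⟩
  · rintro ⟨hy1, hf⟩
    push_neg at hy1
    exact ⟨⟨hy1.2, X.down_closed _ hf _ (by
      intro z hz
      simp only [Finset.mem_insert] at hz ⊢
      tauto)⟩, hy1.1, hf⟩


/-- (L1) the vertex weights of a link sum to 1. -/
lemma sum_linkPi_single {σ : Finset V} (hσ : σ ∈ X.faces) (hd : σ.card ≤ d) :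
    ∑ x ∈ X.linkVerts σ, X.linkPi σ {x} = 1 := by
  have hWσ := X.W_pos' hσ
  have hsum : ∑ x ∈ X.linkVerts σ, X.W (σ.card + 1) (insert x σ) =
      ((σ.card : ℝ) + 1) * X.W σ.card σ := by
    rw [← Finset.sum_image (g := fun x => insert x σ) (f := X.W (σ.card + 1)) X.insert_inj_on,
      ← X.filter_superset_eq_image hσ]
    have h := X.W_rec hd σ
    rw [h]
    field_simp
  rw [Finset.sum_congr rfl (fun x hx => X.linkPi_single hx), ← Finset.sum_div, hsum]
  field_simp

/-- (L2) `(D g)(σ)` is the average of `g` over the link of `σ`. -/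
lemma downOp_eq_link {σ : Finset V} (hσ : σ ∈ X.faces) (g : Finset V → ℝ) :
    X.downOp g σ = ∑ x ∈ X.linkVerts σ, X.linkPi σ {x} * g (insert x σ) := by
  rw [downOp, X.filter_superset_eq_image hσ,
    Finset.sum_image (f := fun β => (X.W (σ.card+1) β * g β) / (((σ.card:ℝ)+1) * X.W σ.card σ))
      X.insert_inj_on]
  exact Finset.sum_congr rfl fun x hx => by rw [X.linkPi_single hx]; ring

/-- (L3) row sums of the pair weights. -/
lemma sum_linkPi_pair {σ : Finset V} (hσ : σ ∈ X.faces) (hd : σ.card + 1 ≤ d) {x : V}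
    (hx : x ∈ X.linkVerts σ) :
    ∑ y ∈ X.linkVerts (insert x σ), X.linkPi σ {x, y} = 2 * X.linkPi σ {x} := by
  rw [mem_linkVerts] at hx
  have hxf := hx.2
  have hcard : (insert x σ).card = σ.card + 1 := Finset.card_insert_of_notMem hx.1
  have hWσ := X.W_pos' hσ
  have hsum : ∑ y ∈ X.linkVerts (insert x σ), X.W (σ.card + 2) (insert y (insert x σ)) =
      ((σ.card : ℝ) + 2) * X.W (σ.card + 1) (insert x σ) := by
    rw [← Finset.sum_image (g := fun y => insert y (insert x σ)) (f := X.W (σ.card + 2))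
      X.insert_inj_on]
    have himg := X.filter_superset_eq_image hxf
    rw [hcard] at himg
    have h := X.W_rec hd (insert x σ)
    simp only [show σ.card + 1 + 1 = σ.card + 2 by omega] at h himg
    rw [← himg, h]
    push_cast
    field_simp
    ring
  have hpc : ∀ y ∈ X.linkVerts (insert x σ), X.linkPi σ {x, y} =
      2 * X.W (σ.card + 2) (insert y (insert x σ)) /
        ((((σ.card:ℝ)+2) * ((σ.card:ℝ)+1)) * X.W σ.card σ) := by
    intro y hy
    rw [mem_linkVerts] at hy
    have hyx : x ≠ y := fun h => hy.1 (h ▸ Finset.mem_insert_self x σ)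
    have hyσ : y ∉ σ := fun h => hy.1 (Finset.mem_insert_of_mem h)
    exact X.linkPi_pair hσ hx.1 hyσ hyx
  rw [Finset.sum_congr rfl hpc, X.linkPi_single (X.mem_linkVerts.mpr hx)]
  rw [← Finset.sum_div, ← Finset.mul_sum, hsum]
  field_simp

noncomputable def linkA (X : WSC V d) (σ : Finset V) (u v : V → ℝ) : ℝ :=
  ∑ x ∈ X.linkVerts σ, ∑ y ∈ X.linkVerts (insert x σ),
    (X.linkPi σ {x, y} / 2) * u x * v y

/-- (L5) the quadratic form of the link walk. -/
lemma linkInner_linkWalk {σ : Finset V} (hσ : σ ∈ X.faces) (u v : V → ℝ) :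
    X.linkInner σ u (X.linkWalk σ v) = X.linkA σ u v := by
  rw [linkInner, linkA]
  apply Finset.sum_congr rfl
  intro x hx
  have hx' := X.mem_linkVerts.mp hx
  rw [linkWalk, X.linkVerts_insert hx'.1, Finset.mul_sum]
  apply Finset.sum_congr rfl
  intro y hy
  have hpos := X.linkPi_single_pos hσ hx
  field_simp

lemma link_pair_mem_iff {σ : Finset V} (hσ : σ ∈ X.faces) (x y : V) :
    x ∈ X.linkVerts σ ∧ y ∈ X.linkVerts (insert x σ) ↔
      y ∈ X.linkVerts σ ∧ x ∈ X.linkVerts (insert y σ) := by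
  have key : ∀ a b : V, a ∈ X.linkVerts σ ∧ b ∈ X.linkVerts (insert a σ) →
      b ∈ X.linkVerts σ ∧ a ∈ X.linkVerts (insert b σ) := by
    rintro a b ⟨ha, hb⟩
    rw [mem_linkVerts] at ha hb ⊢
    rw [mem_linkVerts]
    have hbσ : b ∉ σ := fun h => hb.1 (Finset.mem_insert_of_mem h)
    have hba : b ≠ a := fun h => hb.1 (h ▸ Finset.mem_insert_self a σ)
    have hbf : insert b σ ∈ X.faces := by
      refine X.down_closed _ hb.2 _ ?_
      intro z hz
      simp only [Finset.mem_insert] at hz ⊢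
      tauto
    have haf : insert a (insert b σ) ∈ X.faces := by
      rw [Finset.insert_comm]; exact hb.2
    refine ⟨⟨hbσ, hbf⟩, ?_, haf⟩
    simp only [Finset.mem_insert]
    push_neg
    exact ⟨Ne.symm hba, ha.1⟩
  exact ⟨key x y, fun h => key y x h⟩

lemma link_sum_swap {σ : Finset V} (hσ : σ ∈ X.faces) (F : V → V → ℝ) :
    ∑ x ∈ X.linkVerts σ, ∑ y ∈ X.linkVerts (insert x σ), F x y =
      ∑ x ∈ X.linkVerts σ, ∑ y ∈ X.linkVerts (insert x σ), F y x := by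
  exact Finset.sum_comm' (fun x y => (X.link_pair_mem_iff hσ x y).trans (and_comm))

lemma linkA_symm {σ : Finset V} (hσ : σ ∈ X.faces) (u v : V → ℝ) :
    X.linkA σ u v = X.linkA σ v u := by
  rw [linkA, linkA, X.link_sum_swap hσ]
  refine Finset.sum_congr rfl fun x _ => Finset.sum_congr rfl fun y _ => ?_
  rw [Finset.pair_comm]
  ring


lemma linkPi_nonneg (σ τ : Finset V) : 0 ≤ X.linkPi σ τ :=
  div_nonneg (X.W_nonneg _ _) (mul_nonneg (Nat.cast_nonneg _) (X.W_nonneg _ _))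

lemma linkInner_self_nonneg (σ : Finset V) (u : V → ℝ) : 0 ≤ X.linkInner σ u u :=
  Finset.sum_nonneg fun x _ => by
    have := X.linkPi_nonneg σ {x}
    rw [mul_assoc]
    exact mul_nonneg this (mul_self_nonneg _)

lemma linkInner_one_one {σ : Finset V} (hσ : σ ∈ X.faces) (hd : σ.card ≤ d) :
    X.linkInner σ (fun _ => 1) (fun _ => 1) = 1 := by
  rw [linkInner]
  simp only [mul_one]
  exact X.sum_linkPi_single hσ hd

lemma linkA_one {σ : Finset V} (hσ : σ ∈ X.faces) (hd : σ.card + 1 ≤ d) (u : V → ℝ) :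
    X.linkA σ u (fun _ => 1) = X.linkInner σ u (fun _ => 1) := by
  rw [linkA, linkInner]
  apply Finset.sum_congr rfl
  intro x hx
  simp only [mul_one]
  rw [← Finset.sum_mul, ← Finset.sum_div, X.sum_linkPi_pair hσ hd hx]
  ring

lemma linkI_eq_double {σ : Finset V} (hσ : σ ∈ X.faces) (hd : σ.card + 1 ≤ d) (u : V → ℝ) :
    X.linkInner σ u u = ∑ x ∈ X.linkVerts σ, ∑ y ∈ X.linkVerts (insert x σ),
      (X.linkPi σ {x, y} / 2) * (u x)^2 := by
  rw [linkInner]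
  apply Finset.sum_congr rfl
  intro x hx
  rw [← Finset.sum_mul, ← Finset.sum_div, X.sum_linkPi_pair hσ hd hx]
  ring

lemma linkI_eq_double' {σ : Finset V} (hσ : σ ∈ X.faces) (hd : σ.card + 1 ≤ d) (u : V → ℝ) :
    X.linkInner σ u u = ∑ x ∈ X.linkVerts σ, ∑ y ∈ X.linkVerts (insert x σ),
      (X.linkPi σ {x, y} / 2) * (u y)^2 := by
  rw [X.linkI_eq_double hσ hd u, X.link_sum_swap hσ]
  refine Finset.sum_congr rfl fun x _ => Finset.sum_congr rfl fun y _ => by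
    rw [Finset.pair_comm]

lemma abs_linkA_le {σ : Finset V} (hσ : σ ∈ X.faces) (hd : σ.card + 1 ≤ d) (u : V → ℝ) :
    |X.linkA σ u u| ≤ X.linkInner σ u u := by
  have hsub : X.linkInner σ u u + X.linkInner σ u u - (X.linkA σ u u + X.linkA σ u u) =
      ∑ x ∈ X.linkVerts σ, ∑ y ∈ X.linkVerts (insert x σ),
        (X.linkPi σ {x, y} / 2) * (u x - u y)^2 := by
    rw [show X.linkInner σ u u + X.linkInner σ u u =
        (∑ x ∈ X.linkVerts σ, ∑ y ∈ X.linkVerts (insert x σ),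
          (X.linkPi σ {x, y} / 2) * (u x)^2) +
        (∑ x ∈ X.linkVerts σ, ∑ y ∈ X.linkVerts (insert x σ),
          (X.linkPi σ {x, y} / 2) * (u y)^2) from by
      rw [← X.linkI_eq_double hσ hd u, ← X.linkI_eq_double' hσ hd u]]
    rw [linkA]
    simp only [← Finset.sum_add_distrib, ← Finset.sum_sub_distrib]
    refine Finset.sum_congr rfl fun x _ => Finset.sum_congr rfl fun y _ => by ring
  have hadd : X.linkInner σ u u + X.linkInner σ u u + (X.linkA σ u u + X.linkA σ u u) =
      ∑ x ∈ X.linkVerts σ, ∑ y ∈ X.linkVerts (insert x σ),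
        (X.linkPi σ {x, y} / 2) * (u x + u y)^2 := by
    rw [show X.linkInner σ u u + X.linkInner σ u u =
        (∑ x ∈ X.linkVerts σ, ∑ y ∈ X.linkVerts (insert x σ),
          (X.linkPi σ {x, y} / 2) * (u x)^2) +
        (∑ x ∈ X.linkVerts σ, ∑ y ∈ X.linkVerts (insert x σ),
          (X.linkPi σ {x, y} / 2) * (u y)^2) from by
      rw [← X.linkI_eq_double hσ hd u, ← X.linkI_eq_double' hσ hd u]]
    rw [linkA]
    simp only [← Finset.sum_add_distrib]
    refine Finset.sum_congr rfl fun x _ => Finset.sum_congr rfl fun y _ => by ring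
  have h1 : (0:ℝ) ≤ ∑ x ∈ X.linkVerts σ, ∑ y ∈ X.linkVerts (insert x σ),
      (X.linkPi σ {x, y} / 2) * (u x - u y)^2 :=
    Finset.sum_nonneg fun x _ => Finset.sum_nonneg fun y _ => by
      have := X.linkPi_nonneg σ {x, y}; positivity
  have h2 : (0:ℝ) ≤ ∑ x ∈ X.linkVerts σ, ∑ y ∈ X.linkVerts (insert x σ),
      (X.linkPi σ {x, y} / 2) * (u x + u y)^2 :=
    Finset.sum_nonneg fun x _ => Finset.sum_nonneg fun y _ => by
      have := X.linkPi_nonneg σ {x, y}; positivity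
  rw [abs_le]
  constructor <;> linarith


lemma rayleigh_le_one {σ : Finset V} (hσ : σ ∈ X.faces) (hd : σ.card + 1 ≤ d) :
    ∀ r ∈ { r : ℝ | ∃ f : V → ℝ,
      X.linkInner σ f (fun _ => 1) = 0 ∧ X.linkInner σ f f ≠ 0 ∧
      r = X.linkInner σ f (X.linkWalk σ f) / X.linkInner σ f f }, r ≤ 1 := by
  rintro r ⟨f, -, hne, rfl⟩
  have hIpos : 0 < X.linkInner σ f f := (X.linkInner_self_nonneg σ f).lt_of_ne (Ne.symm hne)
  rw [div_le_one hIpos, X.linkInner_linkWalk hσ]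
  exact le_trans (le_abs_self _) (X.abs_linkA_le hσ hd f)

lemma linkLam2_le_one {σ : Finset V} (hσ : σ ∈ X.faces) (hd : σ.card + 1 ≤ d) :
    X.linkLam2 σ ≤ 1 :=
  Real.sSup_le (X.rayleigh_le_one hσ hd) zero_le_one

lemma linkLam2_le_gamma {γ : ℝ} (hγ : ∀ m : ℕ, m < d → X.gammaC m ≤ γ)
    {σ : Finset V} (hσ : σ ∈ X.faces) (hd : σ.card + 1 ≤ d) :
    X.linkLam2 σ ≤ γ := by
  refine le_trans (le_trans (le_csSup ⟨1, ?_⟩ ?_) (le_refl (X.gammaC σ.card)))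
    (hγ σ.card (by omega))
  · rintro r ⟨α, hα, hc, rfl⟩
    exact X.linkLam2_le_one hα (by omega)
  · exact ⟨σ, hσ, rfl, rfl⟩

/-- Lemma B: the link quadratic form bound. -/
lemma link_quadform_le {σ : Finset V} (hσ : σ ∈ X.faces) (hd : σ.card + 1 ≤ d)
    {γ : ℝ} (hγ : ∀ m : ℕ, m < d → X.gammaC m ≤ γ) (h : V → ℝ) :
    X.linkInner σ h (X.linkWalk σ h) ≤ (X.linkInner σ h (fun _ => 1))^2 +
      γ * (X.linkInner σ h h - (X.linkInner σ h (fun _ => 1))^2) := by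
  have hd0 : σ.card ≤ d := by omega
  set c := X.linkInner σ h (fun _ => 1) with hc
  set p : V → ℝ := fun x => h x - c with hp
  have hpy : ∀ y, p y = h y - c := fun _ => rfl
  have h11 := X.linkInner_one_one hσ hd0
  have horth : X.linkInner σ p (fun _ => 1) = 0 := by
    have e : X.linkInner σ p (fun _ => 1) =
        X.linkInner σ h (fun _ => 1) - c * X.linkInner σ (fun _ => 1) (fun _ => 1) := by
      simp only [linkInner, Finset.mul_sum, ← Finset.sum_sub_distrib]
      exact Finset.sum_congr rfl fun x _ => by rw [hpy]; ring
    rw [e, h11]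
    ring
  have hIp : X.linkInner σ p p = X.linkInner σ h h - c^2 := by
    have e : X.linkInner σ p p = X.linkInner σ h h
        - 2 * c * X.linkInner σ h (fun _ => 1)
        + c^2 * X.linkInner σ (fun _ => 1) (fun _ => 1) := by
      simp only [linkInner, Finset.mul_sum, ← Finset.sum_sub_distrib, ← Finset.sum_add_distrib]
      exact Finset.sum_congr rfl fun x _ => by rw [hpy]; ring
    rw [e, h11]
    ring
  have hA : X.linkA σ h h = X.linkA σ p p + c^2 := by
    have e : X.linkA σ h h = X.linkA σ p p
        + c * X.linkA σ (fun _ => 1) h + c * X.linkA σ h (fun _ => 1)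
        - c^2 * X.linkA σ (fun _ => 1) (fun _ => 1) := by
      simp only [linkA, Finset.mul_sum, ← Finset.sum_sub_distrib, ← Finset.sum_add_distrib]
      refine Finset.sum_congr rfl fun x _ => ?_
      try simp only [← Finset.sum_sub_distrib, ← Finset.sum_add_distrib]
      exact Finset.sum_congr rfl fun y _ => by rw [hpy, hpy]; ring
    have e1 : X.linkA σ (fun _ => 1) h = c := by
      rw [X.linkA_symm hσ, X.linkA_one hσ hd, ← hc]
    have e2 : X.linkA σ h (fun _ => 1) = c := by rw [X.linkA_one hσ hd, ← hc]
    have e3 : X.linkA σ (fun _ => 1) (fun _ => 1) = 1 := by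
      rw [X.linkA_one hσ hd, h11]
    rw [e, e1, e2, e3]
    ring
  have hAp : X.linkA σ p p ≤ γ * X.linkInner σ p p := by
    by_cases hz : X.linkInner σ p p = 0
    · have hzero : ∀ x ∈ X.linkVerts σ, p x = 0 := by
        intro x hx
        have hterms : ∀ y ∈ X.linkVerts σ, 0 ≤ X.linkPi σ {y} * p y * p y := fun y hy => by
          rw [mul_assoc]
          exact mul_nonneg (X.linkPi_nonneg σ {y}) (mul_self_nonneg _)
        have h0 := (Finset.sum_eq_zero_iff_of_nonneg hterms).mp hz x hx
        have hpos := X.linkPi_single_pos hσ hx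
        rw [mul_assoc] at h0
        rcases mul_eq_zero.mp h0 with h1 | h1
        · exact absurd h1 hpos.ne'
        · exact mul_self_eq_zero.mp h1
      have hz2 : X.linkA σ p p = 0 := by
        rw [linkA]
        refine Finset.sum_eq_zero fun x hx => Finset.sum_eq_zero fun y _ => by
          rw [hzero x hx]; ring
      rw [hz2, hz]
      simp
    · have hIpos : 0 < X.linkInner σ p p := (X.linkInner_self_nonneg σ p).lt_of_ne (Ne.symm hz)
      have hmem : X.linkA σ p p / X.linkInner σ p p ∈ { r : ℝ | ∃ f : V → ℝ,
          X.linkInner σ f (fun _ => 1) = 0 ∧ X.linkInner σ f f ≠ 0 ∧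
          r = X.linkInner σ f (X.linkWalk σ f) / X.linkInner σ f f } :=
        ⟨p, horth, hz, by rw [X.linkInner_linkWalk hσ]⟩
      have h1 : X.linkA σ p p / X.linkInner σ p p ≤ X.linkLam2 σ := by
        refine le_csSup ⟨1, fun r hr => X.rayleigh_le_one hσ hd r hr⟩ hmem
      have h2 := X.linkLam2_le_gamma hγ hσ hd
      calc X.linkA σ p p = (X.linkA σ p p / X.linkInner σ p p) * X.linkInner σ p p := by
            field_simp
        _ ≤ γ * X.linkInner σ p p :=
            mul_le_mul_of_nonneg_right (le_trans h1 h2) hIpos.le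
  rw [X.linkInner_linkWalk hσ, hA]
  have hfin : γ * X.linkInner σ p p = γ * (X.linkInner σ h h - c^2) := by rw [hIp]
  linarith


lemma sum_W_superset {m : ℕ} (hmd : m ≤ d) {α : Finset V} (hα : α ∈ X.faces) :
    ∑ β ∈ X.faces.filter (fun β => α ⊆ β ∧ β.card = m + 1), X.W (m+1) β =
      ((m:ℝ)+1) * X.W m α := by
  have h := X.W_rec hmd α
  rw [h]
  field_simp

lemma sum_erase_split {α β : Finset V} (hαβ : α ⊆ β) (hc : β.card = α.card + 1)
    (f : Finset V → ℝ) :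
    ∑ x ∈ β, f (β.erase x) = f α + ∑ x ∈ α, f (β.erase x) := by
  have h1 : (β \ α).card = 1 := by rw [Finset.card_sdiff_of_subset hαβ]; omega
  obtain ⟨y, hy⟩ := Finset.card_eq_one.mp h1
  have hyβ : y ∈ β \ α := hy ▸ Finset.mem_singleton_self y
  rw [Finset.mem_sdiff] at hyβ
  have hβ : β = insert y α := by
    refine (Finset.eq_of_subset_of_card_le (Finset.insert_subset hyβ.1 hαβ) ?_).symm
    rw [Finset.card_insert_of_notMem hyβ.2]; omega
  have he : β.erase y = α := by rw [hβ, Finset.erase_insert hyβ.2]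
  calc ∑ x ∈ β, f (β.erase x) = ∑ x ∈ insert y α, f (β.erase x) := by rw [← hβ]
    _ = f (β.erase y) + ∑ x ∈ α, f (β.erase x) := Finset.sum_insert hyβ.2
    _ = f α + ∑ x ∈ α, f (β.erase x) := by rw [he]

lemma inn_downOp_expand {m : ℕ} (u v : Finset V → ℝ) :
    X.inn m u (X.downOp v) =
      ∑ α ∈ X.faces.filter (fun α => α.card = m),
        ∑ β ∈ X.faces.filter (fun β => α ⊆ β ∧ β.card = m + 1),
          (X.W (m+1) β * v β / ((m:ℝ)+1)) * u α := by
  apply Finset.sum_congr rfl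
  intro α hα
  rw [Finset.mem_filter] at hα
  have hW : X.W m α ≠ 0 := by
    have := X.W_pos' hα.1; rw [hα.2] at this; exact ne_of_gt this
  simp only [downOp, hα.2]
  rw [Finset.mul_sum]
  apply Finset.sum_congr rfl
  intro β _
  field_simp

/-- Lemma C: reindexing pairs `(σ, x)` with `x` a link vertex of `σ` as `(α, x)` with
`x ∈ α`. -/
lemma link_pair_reindex {m : ℕ} (hm : 1 ≤ m) (F : Finset V → V → ℝ) :
    ∑ σ ∈ X.faces.filter (fun σ => σ.card = m - 1), ∑ x ∈ X.linkVerts σ, F σ x =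
      ∑ α ∈ X.faces.filter (fun α => α.card = m), ∑ x ∈ α, F (α.erase x) x := by
  rw [Finset.sum_sigma', Finset.sum_sigma']
  refine Finset.sum_nbij' (fun p => ⟨insert p.2 p.1, p.2⟩) (fun q => ⟨q.1.erase q.2, q.2⟩)
    ?_ ?_ ?_ ?_ ?_
  · rintro ⟨σ, x⟩ hp
    simp only [Finset.mem_sigma, Finset.mem_filter, mem_linkVerts] at hp ⊢
    obtain ⟨⟨hσf, hσc⟩, hxσ, hxf⟩ := hp
    exact ⟨⟨hxf, by rw [Finset.card_insert_of_notMem hxσ]; omega⟩, Finset.mem_insert_self _ _⟩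
  · rintro ⟨α, x⟩ hq
    simp only [Finset.mem_sigma, Finset.mem_filter, mem_linkVerts] at hq ⊢
    obtain ⟨⟨hαf, hαc⟩, hxα⟩ := hq
    refine ⟨⟨X.down_closed _ hαf _ (Finset.erase_subset _ _), by
      rw [Finset.card_erase_of_mem hxα]; omega⟩, Finset.notMem_erase _ _, ?_⟩
    rw [Finset.insert_erase hxα]
    exact hαf
  · rintro ⟨σ, x⟩ hp
    simp only [Finset.mem_sigma, Finset.mem_filter, mem_linkVerts] at hp
    have : (insert x σ).erase x = σ := Finset.erase_insert hp.2.1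
    simp only [Sigma.mk.inj_iff, this]
  · rintro ⟨α, x⟩ hq
    simp only [Finset.mem_sigma, Finset.mem_filter] at hq
    have : insert x (α.erase x) = α := Finset.insert_erase hq.2
    simp only [Sigma.mk.inj_iff, this]
  · rintro ⟨σ, x⟩ hp
    simp only [Finset.mem_sigma, Finset.mem_filter, mem_linkVerts] at hp
    rw [Finset.erase_insert hp.2.1]

/-- `Σ_σ W(σ) ⟨g_σ, g_σ⟩_σ = ⟨g,g⟩_m` -/
lemma sum_link_inner_self {m : ℕ} (hm : 1 ≤ m) (hmd : m ≤ d + 1) (g : Finset V → ℝ) :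
    ∑ σ ∈ X.faces.filter (fun σ => σ.card = m - 1),
      X.W (m-1) σ * X.linkInner σ (fun x => g (insert x σ)) (fun x => g (insert x σ)) =
      X.inn m g g := by
  have step1 : ∀ σ ∈ X.faces.filter (fun σ => σ.card = m - 1),
      X.W (m-1) σ * X.linkInner σ (fun x => g (insert x σ)) (fun x => g (insert x σ)) =
      ∑ x ∈ X.linkVerts σ, (1/(m:ℝ)) * (X.W m (insert x σ) * g (insert x σ) * g (insert x σ)) := by
    intro σ hσ
    rw [Finset.mem_filter] at hσ
    have hWσ : 0 < X.W σ.card σ := X.W_pos' hσ.1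
    rw [linkInner, Finset.mul_sum]
    apply Finset.sum_congr rfl
    intro x hx
    rw [X.linkPi_single hx]
    rw [hσ.2] at hWσ ⊢
    have e1 : m - 1 + 1 = m := by omega
    have e2 : ((m - 1 : ℕ):ℝ) + 1 = (m:ℝ) := by
      rw [Nat.cast_sub hm]; push_cast; ring
    rw [e1, e2]
    have hm0 : (m:ℝ) ≠ 0 := by positivity
    field_simp
  rw [Finset.sum_congr rfl step1,
    X.link_pair_reindex hm (fun σ x => (1/(m:ℝ)) * (X.W m (insert x σ) * g (insert x σ) * g (insert x σ)))]
  rw [inn]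
  apply Finset.sum_congr rfl
  intro α hα
  rw [Finset.mem_filter] at hα
  have he : ∀ x ∈ α, insert x (α.erase x) = α := fun x hx => Finset.insert_erase hx
  rw [Finset.sum_congr rfl (fun x hx => by rw [he x hx])]
  rw [Finset.sum_const, hα.2]
  have hm0 : (m:ℝ) ≠ 0 := by positivity
  rw [nsmul_eq_mul]
  field_simp
  try ring

/-- `(D g)(σ) = ⟨g_σ, 1⟩_σ` -/
lemma downOp_eq_linkInner_one {σ : Finset V} (hσ : σ ∈ X.faces) (g : Finset V → ℝ) :
    X.downOp g σ = X.linkInner σ (fun x => g (insert x σ)) (fun _ => 1) := by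
  rw [X.downOp_eq_link hσ, linkInner]
  try exact Finset.sum_congr rfl fun x _ => by ring


/-- Lemma A: the energy decomposition of `‖U g‖²`. -/
lemma energy_eq {m : ℕ} (hm1 : 1 ≤ m) (hmd : m ≤ d) (g : Finset V → ℝ) :
    X.inn (m+1) (upOp g) (upOp g) =
      (1/((m:ℝ)+1)) * X.inn m g g +
      ((m:ℝ)/((m:ℝ)+1)) * ∑ σ ∈ X.faces.filter (fun σ => σ.card = m - 1),
        X.W (m-1) σ * X.linkInner σ (fun x => g (insert x σ))
          (X.linkWalk σ (fun x => g (insert x σ))) := by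
  have hm0 : (m:ℝ) ≠ 0 := by positivity
  have hm10 : ((m:ℝ)+1) ≠ 0 := by positivity
  have key1 : X.inn (m+1) (upOp g) (upOp g) =
      ∑ α ∈ X.faces.filter (fun α => α.card = m),
        ∑ β ∈ X.faces.filter (fun β => α ⊆ β ∧ β.card = m + 1),
          (X.W (m+1) β * g α * g α / (((m:ℝ)+1)^2) +
            ∑ x ∈ α, X.W (m+1) β * g α * g (β.erase x) / (((m:ℝ)+1)^2)) := by
    rw [X.inn_upOp_eq hmd, X.inn_downOp_expand]
    refine Finset.sum_congr rfl fun α hα => Finset.sum_congr rfl fun β hβ => ?_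
    rw [Finset.mem_filter] at hα hβ
    rw [upOp, hβ.2.2, sum_erase_split hβ.2.1 (by omega)]
    rw [show (∑ x ∈ α, X.W (m+1) β * g α * g (β.erase x) / (((m:ℝ)+1)^2)) =
        (∑ x ∈ α, g (β.erase x)) * (X.W (m+1) β * g α / (((m:ℝ)+1)^2)) from by
      rw [Finset.sum_mul]
      exact Finset.sum_congr rfl fun x _ => by ring]
    push_cast
    field_simp
  have diag : ∑ α ∈ X.faces.filter (fun α => α.card = m),
      ∑ β ∈ X.faces.filter (fun β => α ⊆ β ∧ β.card = m + 1),
        X.W (m+1) β * g α * g α / (((m:ℝ)+1)^2) = (1/((m:ℝ)+1)) * X.inn m g g := by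
    rw [inn, Finset.mul_sum]
    refine Finset.sum_congr rfl fun α hα => ?_
    rw [Finset.mem_filter] at hα
    have hs := X.sum_W_superset hmd hα.1
    rw [show (∑ β ∈ X.faces.filter (fun β => α ⊆ β ∧ β.card = m + 1),
        X.W (m+1) β * g α * g α / (((m:ℝ)+1)^2)) =
        (∑ β ∈ X.faces.filter (fun β => α ⊆ β ∧ β.card = m + 1), X.W (m+1) β) *
          (g α * g α / (((m:ℝ)+1)^2)) from by
      rw [Finset.sum_mul]
      exact Finset.sum_congr rfl fun β _ => by ring]
    rw [hs]
    field_simp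
  have hOff : ∑ α ∈ X.faces.filter (fun α => α.card = m),
      ∑ β ∈ X.faces.filter (fun β => α ⊆ β ∧ β.card = m + 1),
        ∑ x ∈ α, X.W (m+1) β * g α * g (β.erase x) / (((m:ℝ)+1)^2) =
      ∑ α ∈ X.faces.filter (fun α => α.card = m),
        ∑ x ∈ α, ∑ y ∈ X.linkVerts α,
          X.W (m+1) (insert y α) * g α * g (insert y (α.erase x)) / (((m:ℝ)+1)^2) := by
    refine Finset.sum_congr rfl fun α hα => ?_
    rw [Finset.mem_filter] at hα
    have himg := X.filter_superset_eq_image hα.1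
    rw [hα.2] at himg
    rw [himg, Finset.sum_image X.insert_inj_on, Finset.sum_comm]
    refine Finset.sum_congr rfl fun x hx => Finset.sum_congr rfl fun y hy => ?_
    rw [mem_linkVerts] at hy
    have hyx : y ≠ x := fun h => hy.1 (h ▸ hx)
    rw [Finset.erase_insert_of_ne hyx]
  have hN : ∑ σ ∈ X.faces.filter (fun σ => σ.card = m - 1),
      X.W (m-1) σ * X.linkInner σ (fun x => g (insert x σ))
        (X.linkWalk σ (fun x => g (insert x σ))) =
      ∑ α ∈ X.faces.filter (fun α => α.card = m),
        ∑ x ∈ α, ∑ y ∈ X.linkVerts α,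
          X.W (m+1) (insert y α) * g α * g (insert y (α.erase x)) /
            ((m:ℝ) * ((m:ℝ)+1)) := by
    have step : ∑ σ ∈ X.faces.filter (fun σ => σ.card = m - 1),
        X.W (m-1) σ * X.linkInner σ (fun x => g (insert x σ))
          (X.linkWalk σ (fun x => g (insert x σ))) =
        ∑ σ ∈ X.faces.filter (fun σ => σ.card = m - 1), ∑ x ∈ X.linkVerts σ,
          ∑ y ∈ X.linkVerts (insert x σ),
            X.W (m+1) (insert y (insert x σ)) * g (insert x σ) * g (insert y σ) /
              ((m:ℝ) * ((m:ℝ)+1)) := by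
      refine Finset.sum_congr rfl fun σ hσ => ?_
      rw [Finset.mem_filter] at hσ
      rw [X.linkInner_linkWalk hσ.1, linkA, Finset.mul_sum]
      refine Finset.sum_congr rfl fun x hx => ?_
      rw [Finset.mul_sum]
      refine Finset.sum_congr rfl fun y hy => ?_
      have hx' := X.mem_linkVerts.mp hx
      have hy' := X.mem_linkVerts.mp hy
      have hyσ : y ∉ σ := fun h => hy'.1 (Finset.mem_insert_of_mem h)
      have hxy : x ≠ y := fun h => hy'.1 (h ▸ Finset.mem_insert_self x σ)
      rw [X.linkPi_pair hσ.1 hx'.1 hyσ hxy]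
      have hWσ : 0 < X.W σ.card σ := X.W_pos' hσ.1
      rw [hσ.2] at hWσ
      have e1 : σ.card + 2 = m + 1 := by omega
      have e2 : ((σ.card:ℝ) + 2) = (m:ℝ) + 1 := by
        have : ((σ.card + 2 : ℕ):ℝ) = ((m + 1 : ℕ):ℝ) := by exact_mod_cast congrArg Nat.cast e1
        push_cast at this
        linarith
      have e3 : ((σ.card:ℝ) + 1) = (m:ℝ) := by linarith
      rw [e1, e2, e3, hσ.2]
      field_simp
    rw [step, X.link_pair_reindex hm1 (fun σ x => ∑ y ∈ X.linkVerts (insert x σ),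
      X.W (m+1) (insert y (insert x σ)) * g (insert x σ) * g (insert y σ) /
        ((m:ℝ) * ((m:ℝ)+1)))]
    refine Finset.sum_congr rfl fun α hα => Finset.sum_congr rfl fun x hx => ?_
    rw [Finset.insert_erase hx]
  rw [key1]
  simp only [Finset.sum_add_distrib]
  rw [diag, hOff, hN]
  rw [Finset.mul_sum]
  refine congrArg _ (Finset.sum_congr rfl fun α hα => ?_)
  rw [Finset.mul_sum]
  refine Finset.sum_congr rfl fun x hx => ?_
  rw [Finset.mul_sum]
  refine Finset.sum_congr rfl fun y hy => ?_
  field_simp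


lemma inn_self_nonneg (k : ℕ) (u : Finset V → ℝ) : 0 ≤ X.inn k u u :=
  Finset.sum_nonneg fun α _ => by
    rw [mul_assoc]
    exact mul_nonneg (X.W_nonneg _ _) (mul_self_nonneg _)

lemma inn_symm (k : ℕ) (u v : Finset V → ℝ) : X.inn k u v = X.inn k v u :=
  Finset.sum_congr rfl fun α _ => by ring

/-- Cauchy–Schwarz for the weighted inner product. -/
lemma inn_sq_le (k : ℕ) (u v : Finset V → ℝ) :
    (X.inn k u v)^2 ≤ X.inn k u u * X.inn k v v := by
  have h := Finset.sum_mul_sq_le_sq_mul_sq (X.faces.filter (fun α => α.card = k))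
    (fun α => Real.sqrt (X.W k α) * u α) (fun α => Real.sqrt (X.W k α) * v α)
  have hW : ∀ α, Real.sqrt (X.W k α) * Real.sqrt (X.W k α) = X.W k α := fun α =>
    Real.mul_self_sqrt (X.W_nonneg k α)
  calc (X.inn k u v)^2 =
      (∑ α ∈ X.faces.filter (fun α => α.card = k),
        (Real.sqrt (X.W k α) * u α) * (Real.sqrt (X.W k α) * v α))^2 := by
        rw [inn]
        congr 1
        exact Finset.sum_congr rfl fun α _ => by
          linear_combination u α * v α * (hW α).symm
    _ ≤ (∑ α ∈ X.faces.filter (fun α => α.card = k), (Real.sqrt (X.W k α) * u α)^2) *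
        (∑ α ∈ X.faces.filter (fun α => α.card = k), (Real.sqrt (X.W k α) * v α)^2) := h
    _ = X.inn k u u * X.inn k v v := by
        rw [inn, inn]
        congr 1
        · exact Finset.sum_congr rfl fun α _ => by linear_combination u α * u α * hW α
        · exact Finset.sum_congr rfl fun α _ => by linear_combination v α * v α * hW α

lemma inn_congr_right {k : ℕ} {u v v' : Finset V → ℝ}
    (h : ∀ β ∈ X.faces, β.card = k → v β = v' β) : X.inn k u v = X.inn k u v' :=
  Finset.sum_congr rfl fun α hα => by
    rw [Finset.mem_filter] at hα
    rw [h α hα.1 hα.2]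

lemma downOp_one {m : ℕ} (hm : m ≤ d) {α : Finset V} (hα : α ∈ X.faces)
    (hc : α.card = m) : X.downOp (fun _ => 1) α = 1 := by
  have hWα : X.W m α ≠ 0 := by
    have := X.W_pos' hα; rw [hc] at this; exact this.ne'
  rw [downOp, hc]
  simp only [mul_one]
  rw [← Finset.sum_div, X.sum_W_superset hm hα]
  field_simp

/-- orthogonality to constants is preserved by the up operator. -/
lemma inn_upOp_one {m : ℕ} (hm : m ≤ d) (g : Finset V → ℝ) :
    X.inn (m+1) (upOp g) (fun _ => 1) = X.inn m g (fun _ => 1) := by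
  rw [X.inn_upOp_eq hm g (fun _ => 1)]
  exact X.inn_congr_right fun α hα hc => X.downOp_one hm hα hc

/-- `D` preserves orthogonality to constants. -/
lemma inn_downOp_one {m : ℕ} (hm : m ≤ d) (g : Finset V → ℝ)
    (hg : X.inn (m+1) g (fun _ => 1) = 0) :
    X.inn m (X.downOp g) (fun _ => 1) = 0 := by
  have step : X.inn m (fun _ => 1) (X.downOp g) = X.inn (m+1) (upOp (fun _ => 1)) g :=
    (X.inn_upOp_eq hm (fun _ => 1) g).symm
  have hUone : X.inn (m+1) (upOp (fun _ => 1)) g = X.inn (m+1) (fun _ => 1) g := by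
    refine Finset.sum_congr rfl fun β hβ => ?_
    rw [Finset.mem_filter] at hβ
    have : upOp (fun _ => (1:ℝ)) β = 1 := by
      rw [upOp, Finset.sum_const, nsmul_eq_mul, mul_one, hβ.2]
      have : ((m:ℝ)+1) ≠ 0 := by positivity
      push_cast
      field_simp
    rw [this]
  rw [X.inn_symm m (X.downOp g) (fun _ => 1), step, hUone, X.inn_symm (m+1) (fun _ => 1) g, hg]

/-- (★): the energy inequality on a γ-local-spectral expander. -/
lemma energy_le {m : ℕ} (hm1 : 1 ≤ m) (hmd : m ≤ d) {γ : ℝ}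
    (hγ : ∀ k : ℕ, k < d → X.gammaC k ≤ γ) (g : Finset V → ℝ) :
    X.inn (m+1) (upOp g) (upOp g) ≤
      (1/((m:ℝ)+1)) * X.inn m g g +
      ((m:ℝ)/((m:ℝ)+1)) * (X.inn (m-1) (X.downOp g) (X.downOp g) +
        γ * (X.inn m g g - X.inn (m-1) (X.downOp g) (X.downOp g))) := by
  rw [X.energy_eq hm1 hmd]
  have hsum : ∑ σ ∈ X.faces.filter (fun σ => σ.card = m - 1),
      X.W (m-1) σ * X.linkInner σ (fun x => g (insert x σ))
        (X.linkWalk σ (fun x => g (insert x σ))) ≤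
      X.inn (m-1) (X.downOp g) (X.downOp g) +
        γ * (X.inn m g g - X.inn (m-1) (X.downOp g) (X.downOp g)) := by
    have hbound : ∀ σ ∈ X.faces.filter (fun σ => σ.card = m - 1),
        X.W (m-1) σ * X.linkInner σ (fun x => g (insert x σ))
          (X.linkWalk σ (fun x => g (insert x σ))) ≤
        X.W (m-1) σ * ((X.downOp g σ)^2 +
          γ * (X.linkInner σ (fun x => g (insert x σ)) (fun x => g (insert x σ)) -
            (X.downOp g σ)^2)) := by
      intro σ hσ
      rw [Finset.mem_filter] at hσ
      have hq := X.link_quadform_le hσ.1 (show σ.card + 1 ≤ d by omega) hγ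
        (fun x => g (insert x σ))
      rw [← X.downOp_eq_linkInner_one hσ.1 g] at hq
      exact mul_le_mul_of_nonneg_left hq (X.W_nonneg _ _)
    refine le_trans (Finset.sum_le_sum hbound) (le_of_eq ?_)
    have expand : ∀ σ ∈ X.faces.filter (fun σ => σ.card = m - 1),
        X.W (m-1) σ * ((X.downOp g σ)^2 +
          γ * (X.linkInner σ (fun x => g (insert x σ)) (fun x => g (insert x σ)) -
            (X.downOp g σ)^2)) =
        (X.W (m-1) σ * X.downOp g σ * X.downOp g σ) +
          γ * ((X.W (m-1) σ * X.linkInner σ (fun x => g (insert x σ))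
            (fun x => g (insert x σ))) - X.W (m-1) σ * X.downOp g σ * X.downOp g σ) :=
      fun σ _ => by ring
    rw [Finset.sum_congr rfl expand, Finset.sum_add_distrib, ← Finset.mul_sum,
      Finset.sum_sub_distrib, X.sum_link_inner_self hm1 (by omega) g]
    rfl
  have hcoef : (0:ℝ) ≤ (m:ℝ)/((m:ℝ)+1) := by positivity
  have := mul_le_mul_of_nonneg_left hsum hcoef
  linarith


lemma faces_filter_card_zero : X.faces.filter (fun α => α.card = 0) = {∅} := by
  ext α
  simp only [Finset.mem_filter, Finset.mem_singleton, Finset.card_eq_zero]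
  constructor
  · rintro ⟨-, h⟩; exact h
  · rintro rfl; exact ⟨X.empty_mem, rfl⟩

/-- The up-operator contraction estimate `T(m)`. -/
lemma up_step {γ : ℝ} (hγ : ∀ k : ℕ, k < d → X.gammaC k ≤ γ) (hγ1 : -1 ≤ γ) :
    ∀ m : ℕ, 1 ≤ m → m ≤ d → ∀ g : Finset V → ℝ, X.inn m g (fun _ => 1) = 0 →
      X.inn (m+1) (upOp g) (upOp g) ≤ (1+γ) * ((m:ℝ)/((m:ℝ)+1)) * X.inn m g g := by
  intro m
  induction m with
  | zero => intro h; omega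
  | succ n ih =>
    intro _ hmd g hg
    have hG0 : 0 ≤ X.inn (n+1) g g := X.inn_self_nonneg _ _
    have hR0 : 0 ≤ X.inn n (X.downOp g) (X.downOp g) := X.inn_self_nonneg _ _
    have horthD : X.inn n (X.downOp g) (fun _ => 1) = 0 :=
      X.inn_downOp_one (by omega) g hg
    have hRb : ((n:ℝ)+1) * X.inn n (X.downOp g) (X.downOp g) ≤
        (1+γ) * (n:ℝ) * X.inn (n+1) g g := by
      rcases Nat.eq_zero_or_pos n with hn0 | hn1
      · subst hn0
        have hR' : X.inn 0 (X.downOp g) (X.downOp g) = 0 := by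
          rw [inn, X.faces_filter_card_zero, Finset.sum_singleton]
          rw [inn, X.faces_filter_card_zero, Finset.sum_singleton] at horthD
          linear_combination (X.downOp g ∅) * horthD
        rw [hR']
        norm_num
      · by_cases hR00 : X.inn n (X.downOp g) (X.downOp g) = 0
        · rw [hR00]
          have : (0:ℝ) ≤ (1+γ) * (n:ℝ) * X.inn (n+1) g g :=
            mul_nonneg (mul_nonneg (by linarith) (by positivity)) hG0
          linarith
        · have hRpos : 0 < X.inn n (X.downOp g) (X.downOp g) :=
            hR0.lt_of_ne (Ne.symm hR00)
          have hadj : X.inn (n+1) (upOp (X.downOp g)) g =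
              X.inn n (X.downOp g) (X.downOp g) :=
            X.inn_upOp_eq (by omega) (X.downOp g) g
          have hCS := X.inn_sq_le (n+1) (upOp (X.downOp g)) g
          rw [hadj] at hCS
          have hup := ih hn1 (by omega) (X.downOp g) horthD
          have hn1R : (0:ℝ) < (n:ℝ)+1 := by positivity
          have hup' : ((n:ℝ)+1) * X.inn (n+1) (upOp (X.downOp g)) (upOp (X.downOp g)) ≤
              (1+γ) * (n:ℝ) * X.inn n (X.downOp g) (X.downOp g) := by
            calc ((n:ℝ)+1) * X.inn (n+1) (upOp (X.downOp g)) (upOp (X.downOp g)) ≤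
                ((n:ℝ)+1) * ((1+γ) * ((n:ℝ)/((n:ℝ)+1)) * X.inn n (X.downOp g) (X.downOp g)) :=
                  mul_le_mul_of_nonneg_left hup hn1R.le
              _ = (1+γ) * (n:ℝ) * X.inn n (X.downOp g) (X.downOp g) := by
                  field_simp
                  try ring
          have hEup0 : 0 ≤ X.inn (n+1) (upOp (X.downOp g)) (upOp (X.downOp g)) :=
            X.inn_self_nonneg _ _
          have h3 : ((n:ℝ)+1) * (X.inn n (X.downOp g) (X.downOp g))^2 ≤
              ((1+γ) * (n:ℝ) * X.inn n (X.downOp g) (X.downOp g)) * X.inn (n+1) g g := by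
            calc ((n:ℝ)+1) * (X.inn n (X.downOp g) (X.downOp g))^2 ≤
                ((n:ℝ)+1) * (X.inn (n+1) (upOp (X.downOp g)) (upOp (X.downOp g)) *
                  X.inn (n+1) g g) := mul_le_mul_of_nonneg_left hCS hn1R.le
              _ = (((n:ℝ)+1) * X.inn (n+1) (upOp (X.downOp g)) (upOp (X.downOp g))) *
                  X.inn (n+1) g g := by ring
              _ ≤ ((1+γ) * (n:ℝ) * X.inn n (X.downOp g) (X.downOp g)) * X.inn (n+1) g g :=
                  mul_le_mul_of_nonneg_right hup' hG0
          nlinarith [h3, hRpos]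
    have hE := X.energy_le (m := n+1) (by omega) hmd hγ g
    simp only [Nat.add_sub_cancel] at hE
    have hM : ((n+1:ℕ):ℝ) = (n:ℝ)+1 := by push_cast; ring
    rw [hM] at hE ⊢
    have hcore : ((n:ℝ)+1)*(1-γ)*(X.inn n (X.downOp g) (X.downOp g)) ≤
        (n:ℝ) * X.inn (n+1) g g := by
      rcases le_or_gt γ 1 with h | h
      · nlinarith [mul_le_mul_of_nonneg_left hRb (show (0:ℝ) ≤ 1-γ by linarith),
          mul_nonneg (mul_nonneg (sq_nonneg γ) (show (0:ℝ) ≤ (n:ℝ) by positivity)) hG0]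
      · nlinarith [mul_nonneg (mul_nonneg (show (0:ℝ) ≤ (n:ℝ)+1 by positivity) hR0)
          (show (0:ℝ) ≤ γ-1 by linarith),
          mul_nonneg (show (0:ℝ) ≤ (n:ℝ) by positivity) hG0]
    have hid : (1+γ)*(((n:ℝ)+1)/(((n:ℝ)+1)+1))*(X.inn (n+1) g g) -
        ((1/(((n:ℝ)+1)+1))*(X.inn (n+1) g g) +
          (((n:ℝ)+1)/(((n:ℝ)+1)+1))*((X.inn n (X.downOp g) (X.downOp g)) +
            γ*((X.inn (n+1) g g) - (X.inn n (X.downOp g) (X.downOp g))))) =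
        (1/(((n:ℝ)+1)+1))*((n:ℝ)*(X.inn (n+1) g g) -
          ((n:ℝ)+1)*(1-γ)*(X.inn n (X.downOp g) (X.downOp g))) := by
      field_simp
      ring
    have hpos2 : (0:ℝ) ≤ 1/(((n:ℝ)+1)+1) := by positivity
    have hnn : 0 ≤ (1/(((n:ℝ)+1)+1))*((n:ℝ)*(X.inn (n+1) g g) -
        ((n:ℝ)+1)*(1-γ)*(X.inn n (X.downOp g) (X.downOp g))) :=
      mul_nonneg hpos2 (by linarith)
    linarith [hE, hid, hnn]


lemma inn_iterate (j : ℕ) : ∀ k : ℕ, k + j ≤ d + 1 → ∀ u v : Finset V → ℝ,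
    X.inn k u ((X.downOp)^[j] v) = X.inn (k + j) (upOp^[j] u) v := by
  induction j with
  | zero => intro k _ u v; simp
  | succ j ihj =>
    intro k hk u v
    rw [Function.iterate_succ_apply (X.downOp) j v,
      ihj k (by omega) u (X.downOp v),
      ← X.inn_upOp_eq (show k + j ≤ d by omega) (upOp^[j] u) v,
      ← Function.iterate_succ_apply' upOp j u, ← Nat.add_assoc]

/-- the iterated contraction estimate along the chain of up operators -/
lemma chain_bound {γ : ℝ} (hγ : ∀ k : ℕ, k < d → X.gammaC k ≤ γ) (hγ1 : -1 ≤ γ)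
    (a : ℕ) (f : Finset V → ℝ) (hf : X.inn (a+1) f (fun _ => 1) = 0) :
    ∀ t : ℕ, a + 1 + t ≤ d →
      X.inn (a+1+t) (upOp^[t] f) (upOp^[t] f) ≤
        (1+γ)^t * (((a:ℝ)+1)/((a:ℝ)+1+(t:ℝ))) * X.inn (a+1) f f ∧
      X.inn (a+1+t) (upOp^[t] f) (fun _ => 1) = 0 := by
  intro t
  induction t with
  | zero =>
    intro _
    constructor
    · simp only [pow_zero, Nat.cast_zero, add_zero, one_mul, Function.iterate_zero_apply]
      rw [div_self (show (a:ℝ)+1 ≠ 0 by positivity), one_mul]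
    · simpa using hf
  | succ t iht =>
    intro hd1
    obtain ⟨hb, ho⟩ := iht (by omega)
    have hm1 : 1 ≤ a + 1 + t := by omega
    have hmd : a + 1 + t ≤ d := by omega
    have hstep := X.up_step hγ hγ1 (a+1+t) hm1 hmd (upOp^[t] f) ho
    have h1γ : (0:ℝ) ≤ 1 + γ := by linarith
    have hcoef : (0:ℝ) ≤ (1+γ) * (((a+1+t:ℕ):ℝ)/(((a+1+t:ℕ):ℝ)+1)) := by positivity
    constructor
    · rw [show a+1+(t+1) = (a+1+t)+1 by omega]
      rw [Function.iterate_succ_apply' upOp t f]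
      refine le_trans hstep (le_trans (mul_le_mul_of_nonneg_left hb hcoef) (le_of_eq ?_))
      have hc : ((a+1+t:ℕ):ℝ) = (a:ℝ)+1+(t:ℝ) := by push_cast; ring
      have hne : (a:ℝ)+1+(t:ℝ) ≠ 0 := by positivity
      have hne1 : (a:ℝ)+1+(t:ℝ)+1 ≠ 0 := by positivity
      rw [hc]
      push_cast
      field_simp
      ring
    · rw [show a+1+(t+1) = (a+1+t)+1 by omega, Function.iterate_succ_apply' upOp t f]
      rw [X.inn_upOp_one hmd]
      exact ho

/-- a γ-local-spectral expander (with the convention used here) has `γ ≥ -1`,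
provided `d ≥ 2`. -/
lemma neg_one_le_gamma {γ : ℝ} (hγ : ∀ k : ℕ, k < d → X.gammaC k ≤ γ) (hd : 2 ≤ d) :
    -1 ≤ γ := by
  have hset : { r : ℝ | ∃ α ∈ X.faces, α.card = 0 ∧ r = X.linkLam2 α } = {X.linkLam2 ∅} := by
    ext r
    simp only [Set.mem_setOf_eq, Set.mem_singleton_iff]
    constructor
    · rintro ⟨α, hα, hc, rfl⟩
      rw [Finset.card_eq_zero.mp hc]
    · rintro rfl
      exact ⟨∅, X.empty_mem, rfl, rfl⟩
  have hgc : X.gammaC 0 = X.linkLam2 ∅ := by rw [gammaC, hset, csSup_singleton]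
  have hd0 : (∅ : Finset V).card + 1 ≤ d := by simp; omega
  -- two distinct vertices
  obtain ⟨β, hβ, -, hβc⟩ := X.pure ∅ X.empty_mem
  obtain ⟨x, hxβ, y, hyβ, hxy⟩ := Finset.one_lt_card.mp (show 1 < β.card by omega)
  have hx : x ∈ X.linkVerts ∅ := by
    rw [mem_linkVerts]
    exact ⟨Finset.notMem_empty x, X.down_closed β hβ _ (by
      intro z hz; rw [Finset.mem_insert] at hz
      rcases hz with rfl | hz
      · exact hxβ
      · exact absurd hz (Finset.notMem_empty z))⟩
  have hy : y ∈ X.linkVerts ∅ := by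
    rw [mem_linkVerts]
    exact ⟨Finset.notMem_empty y, X.down_closed β hβ _ (by
      intro z hz; rw [Finset.mem_insert] at hz
      rcases hz with rfl | hz
      · exact hyβ
      · exact absurd hz (Finset.notMem_empty z))⟩
  set wx := X.linkPi ∅ {x} with hwx
  set wy := X.linkPi ∅ {y} with hwy
  have hwxp : 0 < wx := X.linkPi_single_pos X.empty_mem hx
  have hwyp : 0 < wy := X.linkPi_single_pos X.empty_mem hy
  set f : V → ℝ := fun z => if z = x then wy else if z = y then -wx else 0 with hf
  have hfx : f x = wy := by simp [hf]
  have hfy : f y = -wx := by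
    simp only [hf]
    rw [if_neg (Ne.symm hxy)]
    simp
  have hf0 : ∀ z, z ≠ x → z ≠ y → f z = 0 := by
    intro z h1 h2; simp only [hf]; rw [if_neg h1, if_neg h2]
  have hpair : ({x, y} : Finset V) ⊆ X.linkVerts ∅ := by
    intro z hz; rw [Finset.mem_insert, Finset.mem_singleton] at hz
    rcases hz with rfl | rfl
    · exact hx
    · exact hy
  have hsum : ∀ F : V → ℝ, (∀ z, z ≠ x → z ≠ y → F z = 0) →
      ∑ z ∈ X.linkVerts ∅, F z = F x + F y := by
    intro F hF
    rw [← Finset.sum_subset hpair (fun z _ hz => by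
      rw [Finset.mem_insert, Finset.mem_singleton] at hz
      push_neg at hz
      exact hF z hz.1 hz.2)]
    exact Finset.sum_pair hxy
  have horth : X.linkInner ∅ f (fun _ => 1) = 0 := by
    rw [linkInner, hsum _ (fun z h1 h2 => by rw [hf0 z h1 h2]; ring)]
    rw [hfx, hfy, ← hwx, ← hwy]
    ring
  have hIf : X.linkInner ∅ f f = wx * wy^2 + wy * wx^2 := by
    rw [linkInner, hsum _ (fun z h1 h2 => by rw [hf0 z h1 h2]; ring)]
    rw [hfx, hfy, ← hwx, ← hwy]
    ring
  have hIpos : 0 < X.linkInner ∅ f f := by rw [hIf]; positivity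
  have hA := X.abs_linkA_le X.empty_mem hd0 f
  have hr : -1 ≤ X.linkInner ∅ f (X.linkWalk ∅ f) / X.linkInner ∅ f f := by
    rw [le_div_iff₀ hIpos, X.linkInner_linkWalk X.empty_mem]
    rw [abs_le] at hA
    linarith [hA.1]
  have hmem : X.linkInner ∅ f (X.linkWalk ∅ f) / X.linkInner ∅ f f ∈
      { r : ℝ | ∃ g : V → ℝ, X.linkInner ∅ g (fun _ => 1) = 0 ∧
        X.linkInner ∅ g g ≠ 0 ∧
        r = X.linkInner ∅ g (X.linkWalk ∅ g) / X.linkInner ∅ g g } :=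
    ⟨f, horth, hIpos.ne', rfl⟩
  have hle : X.linkInner ∅ f (X.linkWalk ∅ f) / X.linkInner ∅ f f ≤ X.linkLam2 ∅ :=
    le_csSup ⟨1, fun r hr' => X.rayleigh_le_one X.empty_mem hd0 r hr'⟩ hmem
  have := hγ 0 (by omega)
  rw [hgc] at this
  linarith

end WSC


/-- **Corollary (longer walks on local-spectral expanders).** Let `(X, Π)` be a
weighted pure `d`-dimensional simplicial complex which is a `γ`-local-spectral
expander (`γ_j ≤ γ` for all `-1 ≤ j ≤ d-2`, i.e. `X.gammaC m ≤ γ` for all `m < d`),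
and let `0 ≤ a < b ≤ d-1`.  Then `λ₂(U_{a,b}) ≤ (1+γ)^{b-a} (a+1)/(b+1)`; in
particular, if `γ ≤ ε/(b-a)` with `0 ≤ ε ≤ 1`, then
`λ₂(U_{a,b}) ≤ e^ε (a+1)/(b+1)`. -/
theorem lam2_upDownAB_le {V : Type*} [DecidableEq V] [Fintype V] {d : ℕ}
    (X : WSC V d) (γ : ℝ) (hX : ∀ m : ℕ, m < d → X.gammaC m ≤ γ)
    (a b : ℕ) (hab : a < b) (hbd : b < d) :
    X.lam2 (a + 1) (X.upDownAB (b - a)) ≤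
      (1 + γ) ^ (b - a) * (((a : ℝ) + 1) / ((b : ℝ) + 1)) ∧
    ∀ ε : ℝ, 0 ≤ ε → ε ≤ 1 → γ ≤ ε / ((b - a : ℕ) : ℝ) →
      X.lam2 (a + 1) (X.upDownAB (b - a)) ≤
        Real.exp ε * (((a : ℝ) + 1) / ((b : ℝ) + 1)) := by
  have hd2 : 2 ≤ d := by omega
  have hγ1 : -1 ≤ γ := X.neg_one_le_gamma hX hd2
  have h1γ : (0:ℝ) ≤ 1 + γ := by linarith
  set t := b - a with ht
  have htpos : 1 ≤ t := by omega
  have hcast : ((a:ℝ)+1) + ((t:ℕ):ℝ) = (b:ℝ)+1 := by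
    rw [ht, Nat.cast_sub hab.le]; ring
  have hfrac : (0:ℝ) ≤ ((a:ℝ)+1)/((b:ℝ)+1) := by positivity
  have hpart1 : X.lam2 (a+1) (X.upDownAB t) ≤ (1+γ)^t * (((a:ℝ)+1)/((b:ℝ)+1)) := by
    rw [WSC.lam2]
    apply Real.sSup_le _ (mul_nonneg (pow_nonneg h1γ t) hfrac)
    rintro r ⟨f, hf1, hf2, rfl⟩
    have hIpos : 0 < X.inn (a+1) f f := (X.inn_self_nonneg _ _).lt_of_ne (Ne.symm hf2)
    have hiter : X.inn (a+1) f (X.upDownAB t f) =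
        X.inn (a+1+t) (WSC.upOp^[t] f) (WSC.upOp^[t] f) := by
      rw [WSC.upDownAB, X.inn_iterate t (a+1) (by omega) f (WSC.upOp^[t] f)]
    have hcb := (X.chain_bound hX hγ1 a f hf1 t (by omega)).1
    rw [hcast] at hcb
    rw [div_le_iff₀ hIpos, hiter]
    exact hcb
  refine ⟨hpart1, ?_⟩
  intro ε hε0 hε1 hγε
  have ht1 : (1:ℝ) ≤ ((t:ℕ):ℝ) := by exact_mod_cast htpos
  have htne : ((t:ℕ):ℝ) ≠ 0 := by linarith
  have hstep1 : (1+γ) ≤ 1 + ε/((t:ℕ):ℝ) := by linarith [hγε]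
  have hp1 : (1+γ)^t ≤ (1+ε/((t:ℕ):ℝ))^t := pow_le_pow_left₀ h1γ hstep1 t
  have hp2 : (1+ε/((t:ℕ):ℝ))^t ≤ Real.exp ε := by
    have h := Real.add_one_le_exp (ε/((t:ℕ):ℝ))
    have h0 : (0:ℝ) ≤ 1 + ε/((t:ℕ):ℝ) := by positivity
    calc (1+ε/((t:ℕ):ℝ))^t ≤ (Real.exp (ε/((t:ℕ):ℝ)))^t :=
          pow_le_pow_left₀ h0 (by linarith) t
      _ = Real.exp (((t:ℕ):ℝ) * (ε/((t:ℕ):ℝ))) := (Real.exp_nat_mul _ t).symm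
      _ = Real.exp ε := by rw [mul_comm, div_mul_cancel₀ ε htne]
  exact le_trans hpart1 (mul_le_mul_of_nonneg_right (le_trans hp1 hp2) hfrac)
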